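/- For any α ∈ (0,1), ∫_ℝ |ξ|^{α+1} · 𝓕(φ'_α)(ξ) dξ = Γ((2α+3)/2) / π^{(2α+3)/2}. -/

import Mathlib

open MeasureTheory Filter Real
open scoped ENNReal

noncomputable section

/-- Fourier transform of a real-valued function on ℝ, as a complex-valued function:
`𝓕f(ξ) = ∫ e^{-2πixξ} f(x) dx`. -/
def FT (f : ℝ → ℝ) : ℝ → ℂ :=
  FourierTransform.fourier (fun x => (f x : ℂ))

open Set

lemma abs_gauss_integrable {b q : ℝ} (hb : 0 < b) (hq : -1 < q) :
    Integrable (fun x : ℝ => |x| ^ q * Real.exp (-b * x ^ 2)) := by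
  have h := integrable_rpow_mul_exp_neg_mul_sq hb hq
  rw [← integrableOn_univ, ← Iio_union_Ici (a := (0:ℝ)), integrableOn_union,
    integrableOn_Ici_iff_integrableOn_Ioi]
  constructor
  · rw [← (Measure.measurePreserving_neg (volume : Measure ℝ)).integrableOn_comp_preimage
      (Homeomorph.neg ℝ).measurableEmbedding]
    simp only [Function.comp_def, neg_sq, neg_preimage, neg_Iio, neg_neg, neg_zero, abs_neg]
    refine (h.integrableOn.mono_set (subset_univ _)).congr_fun (fun x hx => ?_) measurableSet_Ioi
    rw [abs_of_pos hx]
  · refine (h.integrableOn.mono_set (subset_univ _)).congr_fun (fun x hx => ?_) measurableSet_Ioi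
    rw [abs_of_pos hx]

lemma moment_gauss {b q : ℝ} (hb : 0 < b) (hq : -1 < q) :
    ∫ x : ℝ, |x| ^ q * Real.exp (-b * x ^ 2) = b ^ (-(q + 1) / 2) * Real.Gamma ((q + 1) / 2) := by
  have h := integral_comp_abs (f := fun r : ℝ => r ^ q * Real.exp (-b * r ^ 2))
  simp only [sq_abs] at h
  have h2 := integral_rpow_mul_exp_neg_mul_rpow (p := 2) two_pos hq hb
  simp_rw [Real.rpow_two] at h2
  rw [h, h2]
  ring

lemma subord {s : ℝ} (hs : 0 < s) (x : ℝ) :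
    (1 + x ^ 2) ^ (-s) =
      Real.pi ^ s / Real.Gamma s *
        ∫ t in Ioi (0:ℝ), t ^ (s - 1) * Real.exp (-(Real.pi * (1 + x ^ 2) * t)) := by
  have hx : (0:ℝ) < 1 + x ^ 2 := by positivity
  have hr : (0:ℝ) < Real.pi * (1 + x ^ 2) := by positivity
  rw [Real.integral_rpow_mul_exp_neg_mul_Ioi hs hr, one_div,
    ← Real.rpow_neg_one (Real.pi * (1 + x ^ 2)), ← Real.rpow_mul hr.le,
    Real.mul_rpow Real.pi_pos.le hx.le]
  have hG := Real.Gamma_pos_of_pos hs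
  field_simp
  rw [← Real.rpow_add Real.pi_pos]
  simp

lemma gamma_kernel_integrable {q r : ℝ} (hq : -1 < q) (hr : 0 < r) :
    IntegrableOn (fun t : ℝ => t ^ q * Real.exp (-(r * t))) (Ioi 0) := by
  refine (integrableOn_rpow_mul_exp_neg_mul_rpow hq zero_lt_one hr).congr_fun
    (fun t ht => ?_) measurableSet_Ioi
  dsimp only; rw [Real.rpow_one]; ring_nf

lemma phi_integrable {r : ℝ} (hr : 1 < r) :
    Integrable (fun x : ℝ => (1 + x ^ 2) ^ (-r / 2)) := by
  have h := integrable_rpow_neg_one_add_norm_sq (E := ℝ) (μ := volume) (r := r)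
    (by simpa using hr)
  refine h.congr (Filter.Eventually.of_forall fun x => ?_)
  norm_num [Real.norm_eq_abs, sq_abs]

lemma my_integral_ofReal {X : Type*} [MeasurableSpace X] {μ : Measure X} (f : X → ℝ) :
    ∫ x, ((f x : ℝ) : ℂ) ∂μ = ((∫ x, f x ∂μ : ℝ) : ℂ) :=
  integral_ofReal

lemma FT_eq {α : ℝ} (hα : α ∈ Set.Ioo (0:ℝ) 1) (ξ : ℝ) :
    FT (fun x => (1 + x ^ 2) ^ (-(α + 2) / 2)) ξ =
    ((π ^ ((α + 2) / 2) / Real.Gamma ((α + 2) / 2) *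
      ∫ t in Ioi (0:ℝ), t ^ ((α + 2) / 2 - 3 / 2) *
        (Real.exp (-(π * t)) * Real.exp (-(π / t) * ξ ^ 2)) : ℝ) : ℂ) := by
  obtain ⟨hα0, hα1⟩ := hα
  set s : ℝ := (α + 2) / 2 with hs_def
  have hs1 : 1 < s := by rw [hs_def]; linarith
  have hs0 : 0 < s := lt_trans one_pos hs1
  have hG : 0 < Real.Gamma s := Real.Gamma_pos_of_pos hs0
  set c : ℝ := π ^ s / Real.Gamma s with hc_def
  have hc : 0 < c := div_pos (rpow_pos_of_pos pi_pos _) hG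
  set g : ℝ → ℝ → ℝ :=
    fun x t => c * (t ^ (s - 1) * Real.exp (-(π * (1 + x ^ 2) * t))) with hg_def
  have hφ : ∀ x : ℝ, (1 + x ^ 2 : ℝ) ^ (-(α + 2) / 2) = ∫ t in Ioi (0:ℝ), g x t := by
    intro x
    rw [show (-(α + 2) / 2 : ℝ) = -s by rw [hs_def]; ring, subord hs0 x, ← integral_const_mul]
  set e : ℝ → ℂ := fun x => (Real.fourierChar (-(x * ξ)) : ℂ) with he_def
  have he_meas : Measurable e := by
    have : e = fun x => Complex.exp (((2 * π * (-(x * ξ)) : ℝ) : ℂ) * Complex.I) := by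
      funext x; rw [he_def]; exact Real.fourierChar_apply _
    rw [this]; fun_prop
  have he_norm : ∀ x, ‖e x‖ = 1 := fun x => by
    rw [he_def]; exact Circle.norm_coe _
  have hg_int : ∀ x : ℝ, IntegrableOn (g x) (Ioi 0) := fun x =>
    (gamma_kernel_integrable (by linarith : (-1:ℝ) < s - 1)
      (by positivity : (0:ℝ) < π * (1 + x ^ 2))).const_mul c
  have hg_nonneg : ∀ x : ℝ, ∀ t ∈ Ioi (0:ℝ), 0 ≤ g x t := by
    intro x t ht
    have := le_of_lt (mem_Ioi.mp ht)
    rw [hg_def]; positivity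
  have hFT : FT (fun x => (1 + x ^ 2) ^ (-(α + 2) / 2)) ξ
      = ∫ x : ℝ, e x * (((1 + x ^ 2 : ℝ) ^ (-(α + 2) / 2) : ℝ) : ℂ) := by
    rw [FT, Real.fourier_real_eq]
    exact integral_congr_ae (Eventually.of_forall fun v => Circle.smul_def _ _)
  -- integrability on the product
  have hF_meas : AEStronglyMeasurable (fun p : ℝ × ℝ => e p.1 * ((g p.1 p.2 : ℝ) : ℂ))
      (volume.prod (volume.restrict (Ioi 0))) := by
    apply Measurable.aestronglyMeasurable
    apply (he_meas.comp measurable_fst).mul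
    apply Complex.measurable_ofReal.comp
    rw [hg_def]; fun_prop
  have key_int : Integrable (fun p : ℝ × ℝ => e p.1 * ((g p.1 p.2 : ℝ) : ℂ))
      (volume.prod (volume.restrict (Ioi 0))) := by
    rw [integrable_prod_iff hF_meas]
    constructor
    · exact ae_of_all _ fun x => ((hg_int x).ofReal.const_mul (e x))
    · have hnorm : ∀ x : ℝ, (∫ t in Ioi (0:ℝ), ‖e x * ((g x t : ℝ) : ℂ)‖)
          = (1 + x ^ 2 : ℝ) ^ (-(α + 2) / 2) := by
        intro x
        rw [hφ x]
        refine setIntegral_congr_fun measurableSet_Ioi (fun t ht => ?_)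
        rw [norm_mul, he_norm, one_mul, Complex.norm_real, Real.norm_eq_abs,
          abs_of_nonneg (hg_nonneg x t ht)]
      simp only [hnorm]
      exact phi_integrable (by linarith)
  have swap := MeasureTheory.integral_integral_swap
    (f := fun x t => e x * ((g x t : ℝ) : ℂ)) key_int
  have step1 : (∫ x : ℝ, e x * (((1 + x ^ 2 : ℝ) ^ (-(α + 2) / 2) : ℝ) : ℂ))
      = ∫ x : ℝ, ∫ t in Ioi (0:ℝ), e x * ((g x t : ℝ) : ℂ) := by
    refine integral_congr_ae (Eventually.of_forall fun x => ?_)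
    dsimp only
    rw [hφ x, ← my_integral_ofReal, ← integral_const_mul]
  have inner : ∀ t ∈ Ioi (0:ℝ), (∫ x : ℝ, e x * ((g x t : ℝ) : ℂ))
      = ((c * (t ^ (s - 3 / 2) * (Real.exp (-(π * t)) * Real.exp (-(π / t) * ξ ^ 2))) : ℝ) : ℂ) := by
    intro t ht
    have ht' : (0:ℝ) < t := ht
    have hsplit : ∀ x : ℝ,
        g x t = c * (t ^ (s - 1) * Real.exp (-(π * t))) * Real.exp (-(π * t) * x ^ 2) := by
      intro x
      rw [hg_def]
      dsimp only
      rw [show (-(π * (1 + x ^ 2) * t)) = (-(π * t)) + (-(π * t) * x ^ 2) by ring, Real.exp_add]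
      ring
    simp_rw [hsplit]
    have step2 : (∫ x : ℝ, e x * ((c * (t ^ (s - 1) * Real.exp (-(π * t)))
          * Real.exp (-(π * t) * x ^ 2) : ℝ) : ℂ))
        = ((c * (t ^ (s - 1) * Real.exp (-(π * t))) : ℝ) : ℂ)
          * ∫ x : ℝ, e x * Complex.exp (-(π : ℂ) * (t : ℂ) * (x : ℂ) ^ 2) := by
      rw [← integral_const_mul]
      refine integral_congr_ae (Eventually.of_forall fun x => ?_)
      push_cast
      ring
    rw [step2]
    have step3 : (∫ x : ℝ, e x * Complex.exp (-(π : ℂ) * (t : ℂ) * (x : ℂ) ^ 2))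
        = FourierTransform.fourier (fun x : ℝ => Complex.exp (-(π : ℂ) * (t : ℂ) * (x : ℂ) ^ 2)) ξ := by
      rw [Real.fourier_real_eq]
      exact integral_congr_ae (Eventually.of_forall fun v => (Circle.smul_def _ _).symm)
    rw [step3, fourier_gaussian_pi (by simpa using ht' : 0 < ((t : ℂ)).re)]
    dsimp only
    have hcpow : ((t : ℂ)) ^ (1 / 2 : ℂ) = ((t ^ ((1:ℝ) / 2) : ℝ) : ℂ) := by
      rw [Complex.ofReal_cpow ht'.le]
      norm_num
    rw [hcpow]
    have hexp : Complex.exp (-(π : ℂ) / (t : ℂ) * (ξ : ℂ) ^ 2)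
        = ((Real.exp (-(π / t) * ξ ^ 2) : ℝ) : ℂ) := by
      rw [Complex.ofReal_exp]
      push_cast
      ring_nf
    rw [hexp]
    have hpow : t ^ (s - 1) * (t ^ ((1:ℝ) / 2))⁻¹ = t ^ (s - 3 / 2) := by
      rw [← Real.rpow_neg ht'.le, ← Real.rpow_add ht']
      congr 1
      ring
    rw [← hpow]
    push_cast
    ring
  rw [hFT, step1, swap, setIntegral_congr_fun measurableSet_Ioi inner, my_integral_ofReal,
    integral_const_mul]



/-- (The Fourier transform of `φ'_α` is real and nonnegative, so we
integrate its real part.) -/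
theorem integral_abs_pow_fourier_phi_alpha
    (α : ℝ) (hα : α ∈ Set.Ioo (0 : ℝ) 1) :
    ∫ ξ : ℝ, |ξ| ^ (α + 1) * (FT (fun x => (1 + x ^ 2) ^ (-(α + 2) / 2)) ξ).re =
      Real.Gamma ((2 * α + 3) / 2) / π ^ ((2 * α + 3) / 2) := by
  obtain ⟨hα0, hα1⟩ := hα
  have hπ := Real.pi_pos
  set s : ℝ := (α + 2) / 2 with hs_def
  have hs1 : 1 < s := by rw [hs_def]; linarith
  have hs0 : 0 < s := lt_trans one_pos hs1
  have hG : 0 < Real.Gamma s := Real.Gamma_pos_of_pos hs0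
  set c : ℝ := π ^ s / Real.Gamma s with hc_def
  simp only [FT_eq ⟨hα0, hα1⟩, Complex.ofReal_re]
  -- fold the scalar multiplications into the inner integral
  have step1 : ∀ ξ : ℝ, |ξ| ^ (α + 1) * (c *
        ∫ t in Ioi (0:ℝ), t ^ (s - 3 / 2) * (Real.exp (-(π * t)) * Real.exp (-(π / t) * ξ ^ 2)))
      = ∫ t in Ioi (0:ℝ), |ξ| ^ (α + 1) * (c *
          (t ^ (s - 3 / 2) * (Real.exp (-(π * t)) * Real.exp (-(π / t) * ξ ^ 2)))) := by
    intro ξ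
    rw [integral_const_mul, integral_const_mul]
  rw [← hs_def, ← hc_def]
  simp_rw [step1]
  set d : ℝ := c * Real.Gamma ((α + 1 + 1) / 2) * π ^ (-(α + 1 + 1) / 2) with hd_def
  set a2 : ℝ := s - 3 / 2 + (α + 1 + 1) / 2 with ha2_def
  have ha2 : -1 < a2 := by rw [ha2_def, hs_def]; linarith
  have hmeas2 : AEStronglyMeasurable (fun p : ℝ × ℝ => |p.1| ^ (α + 1) *
      (c * (p.2 ^ (s - 3 / 2) * (Real.exp (-(π * p.2)) * Real.exp (-(π / p.2) * p.1 ^ 2)))))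
      (volume.prod (volume.restrict (Ioi 0))) := by
    apply Measurable.aestronglyMeasurable
    fun_prop
  have hslice : ∀ t ∈ Ioi (0:ℝ), Integrable (fun ξ : ℝ => |ξ| ^ (α + 1) *
      (c * (t ^ (s - 3 / 2) * (Real.exp (-(π * t)) * Real.exp (-(π / t) * ξ ^ 2))))) := by
    intro t ht
    have hb : (0:ℝ) < π / t := div_pos hπ ht
    have h := (abs_gauss_integrable hb (by linarith : (-1:ℝ) < α + 1)).const_mul
      (c * (t ^ (s - 3 / 2) * Real.exp (-(π * t))))
    refine h.congr (Eventually.of_forall fun ξ => ?_)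
    ring
  have hval : ∀ t ∈ Ioi (0:ℝ), (∫ ξ : ℝ, |ξ| ^ (α + 1) *
      (c * (t ^ (s - 3 / 2) * (Real.exp (-(π * t)) * Real.exp (-(π / t) * ξ ^ 2)))))
      = d * (t ^ a2 * Real.exp (-(π * t))) := by
    intro t ht
    have ht' : (0:ℝ) < t := ht
    have hb : (0:ℝ) < π / t := div_pos hπ ht'
    have h1 : (fun ξ : ℝ => |ξ| ^ (α + 1) *
        (c * (t ^ (s - 3 / 2) * (Real.exp (-(π * t)) * Real.exp (-(π / t) * ξ ^ 2)))))
        = fun ξ : ℝ => (c * (t ^ (s - 3 / 2) * Real.exp (-(π * t)))) *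
          (|ξ| ^ (α + 1) * Real.exp (-(π / t) * ξ ^ 2)) := by
      funext ξ; ring
    rw [h1, integral_const_mul, moment_gauss hb (by linarith : (-1:ℝ) < α + 1)]
    have h2 : (π / t) ^ (-(α + 1 + 1) / 2) = π ^ (-(α + 1 + 1) / 2) * t ^ ((α + 1 + 1) / 2) := by
      rw [Real.div_rpow pi_pos.le ht'.le, div_eq_mul_inv, ← Real.rpow_neg ht'.le]
      congr 1
      ring
    rw [h2, ha2_def, Real.rpow_add ht', hd_def]
    ring
  have key2 : Integrable (fun p : ℝ × ℝ => |p.1| ^ (α + 1) *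
      (c * (p.2 ^ (s - 3 / 2) * (Real.exp (-(π * p.2)) * Real.exp (-(π / p.2) * p.1 ^ 2)))))
      (volume.prod (volume.restrict (Ioi 0))) := by
    rw [integrable_prod_iff' hmeas2]
    constructor
    · filter_upwards [ae_restrict_mem measurableSet_Ioi] with t ht using hslice t ht
    · have heq : (fun t : ℝ => ∫ ξ : ℝ, ‖|ξ| ^ (α + 1) *
          (c * (t ^ (s - 3 / 2) * (Real.exp (-(π * t)) * Real.exp (-(π / t) * ξ ^ 2))))‖)
          =ᵐ[volume.restrict (Ioi 0)] fun t : ℝ => d * (t ^ a2 * Real.exp (-(π * t))) := by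
        filter_upwards [ae_restrict_mem measurableSet_Ioi] with t ht
        rw [← hval t ht]
        refine integral_congr_ae (Eventually.of_forall fun ξ => ?_)
        dsimp only
        rw [Real.norm_eq_abs, abs_of_nonneg]
        have ht' : (0:ℝ) ≤ t := le_of_lt (mem_Ioi.mp ht)
        have hc' : (0:ℝ) ≤ c := le_of_lt (div_pos (rpow_pos_of_pos pi_pos _) hG)
        positivity
      exact Integrable.congr ((gamma_kernel_integrable ha2 hπ).const_mul d) heq.symm
  rw [MeasureTheory.integral_integral_swap (f := fun ξ t => |ξ| ^ (α + 1) *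
      (c * (t ^ (s - 3 / 2) * (Real.exp (-(π * t)) * Real.exp (-(π / t) * ξ ^ 2))))) key2,
    setIntegral_congr_fun measurableSet_Ioi hval, integral_const_mul]
  have hI := Real.integral_rpow_mul_exp_neg_mul_Ioi
    (show (0:ℝ) < a2 + 1 by linarith) hπ
  rw [add_sub_cancel_right] at hI
  rw [hI]
  have hw : a2 + 1 = (2 * α + 3) / 2 := by rw [ha2_def, hs_def]; ring
  have h3 : ((α + 1 + 1) / 2 : ℝ) = s := by rw [hs_def]; ring
  have h3' : (-(α + 1 + 1) / 2 : ℝ) = -s := by rw [hs_def]; ring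
  rw [hw, hd_def, hc_def, h3, h3', div_mul_cancel₀ _ hG.ne', one_div,
    Real.inv_rpow pi_pos.le, ← Real.rpow_add hπ]
  rw [add_neg_cancel, Real.rpow_zero, one_mul]
  ring
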